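/- A category C with finite products has finite biproducts if and only if C is enriched over commutative monoids (i.e., each hom-set carries a commutative monoid structure such that composition is bilinear). Explicitly, given CMon-enrichment, the product cone is also a coproduct cocone via the injections ⟨id, 0⟩ and ⟨0, id⟩. -/

import Mathlib

open CategoryTheory CategoryTheory.Limits

/-- An enrichment of a category `C` over commutative monoids: every hom-set
carries a commutative monoid structure `(0, +)` and composition preserves `0`
and `+` in each argument (composition is bilinear). -/
structure CMonEnrichment (C : Type*) [Category C] where
  add : ∀ {X Y : C}, (X ⟶ Y) → (X ⟶ Y) → (X ⟶ Y)
  zero : ∀ {X Y : C}, (X ⟶ Y)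
  add_comm : ∀ {X Y : C} (f g : X ⟶ Y), add f g = add g f
  add_assoc : ∀ {X Y : C} (f g h : X ⟶ Y), add (add f g) h = add f (add g h)
  zero_add : ∀ {X Y : C} (f : X ⟶ Y), add zero f = f
  comp_add : ∀ {X Y Z : C} (f : X ⟶ Y) (g h : Y ⟶ Z),
    f ≫ add g h = add (f ≫ g) (f ≫ h)
  add_comp : ∀ {X Y Z : C} (f g : X ⟶ Y) (h : Y ⟶ Z),
    add f g ≫ h = add (f ≫ h) (g ≫ h)
  comp_zero : ∀ {X Y Z : C} (f : X ⟶ Y), f ≫ (zero : Y ⟶ Z) = zero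
  zero_comp : ∀ {X Y Z : C} (f : Y ⟶ Z), (zero : X ⟶ Y) ≫ f = zero

namespace CMonEnrichment

variable {C : Type*} [Category C] (E : CMonEnrichment C)

theorem add_zero' {X Y : C} (f : X ⟶ Y) : E.add f E.zero = f :=
  (E.add_comm f E.zero).trans (E.zero_add f)

/-- The coproduct cocone structure on a binary product, given a CMon-enrichment. -/
noncomputable def binaryIsColimit [HasFiniteProducts C] (X Y : C) :
    IsColimit (BinaryCofan.mk
      (prod.lift (𝟙 X) (E.zero : X ⟶ Y))
      (prod.lift (E.zero : Y ⟶ X) (𝟙 Y))) := by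
  have key : E.add (prod.fst ≫ prod.lift (𝟙 X) (E.zero : X ⟶ Y))
      (prod.snd ≫ prod.lift (E.zero : Y ⟶ X) (𝟙 Y)) = 𝟙 (X ⨯ Y) := by
    apply Limits.prod.hom_ext
    · rw [E.add_comp]
      simp only [Category.assoc, prod.lift_fst, Category.comp_id, Category.id_comp]
      rw [E.comp_zero, E.add_zero']
    · rw [E.add_comp]
      simp only [Category.assoc, prod.lift_snd, Category.comp_id, Category.id_comp]
      rw [E.comp_zero, E.zero_add]
  refine BinaryCofan.isColimitMk
    (fun s => E.add (prod.fst ≫ s.inl) (prod.snd ≫ s.inr)) ?_ ?_ ?_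
  · intro s
    erw [E.comp_add, ← Category.assoc, ← Category.assoc, prod.lift_fst, prod.lift_snd,
      Category.id_comp, E.zero_comp, E.add_zero']
  · intro s
    erw [E.comp_add, ← Category.assoc, ← Category.assoc, prod.lift_fst, prod.lift_snd,
      Category.id_comp, E.zero_comp, E.zero_add]
  · intro s m h1 h2
    calc @Eq (X ⨯ Y ⟶ s.pt) m (𝟙 (X ⨯ Y) ≫ m) := (Category.id_comp m).symm
    _ = @id (X ⨯ Y ⟶ s.pt) (E.add (prod.fst ≫ s.inl) (prod.snd ≫ s.inr)) := by
        rw [← key, E.add_comp, Category.assoc, Category.assoc, h1, h2]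
        exact congrArg₂ E.add rfl rfl

end CMonEnrichment

/-- **A category with finite products has finite biproducts iff it is
CMon-enriched.**  Moreover, given a CMon-enrichment, for each pair of objects
the product cone is also a coproduct cocone via the injections `⟨id, 0⟩` and
`⟨0, id⟩`. -/
theorem biproducts_iff_cmon_enriched (C : Type*) [Category C]
    [HasFiniteProducts C] :
    (Nonempty (CMonEnrichment C) ↔
      ∃ _ : HasZeroMorphisms C, HasFiniteBiproducts C) ∧
    (∀ (E : CMonEnrichment C) (X Y : C),
      Nonempty (IsColimit (BinaryCofan.mk
        (prod.lift (𝟙 X) (E.zero : X ⟶ Y))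
        (prod.lift (E.zero : Y ⟶ X) (𝟙 Y))))) := by
  constructor
  · constructor
    · rintro ⟨E⟩
      letI hzero : HasZeroMorphisms C :=
        { zero := fun X Y => ⟨E.zero⟩
          comp_zero := fun {X Y} f Z => E.comp_zero f
          zero_comp := fun X {Y Z} f => E.zero_comp f }
      refine ⟨hzero, ?_⟩
      letI hmon : ∀ X Y : C, AddCommMonoid (X ⟶ Y) := fun X Y =>
        { add := E.add
          zero := E.zero
          add_assoc := E.add_assoc
          zero_add := E.zero_add
          add_zero := E.add_zero'
          add_comm := E.add_comm
          nsmul := letI : Zero (X ⟶ Y) := ⟨E.zero⟩; letI : Add (X ⟶ Y) := ⟨E.add⟩; nsmulRec }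
      have zero_eq : ∀ {X Y : C}, (0 : X ⟶ Y) = E.zero := fun {X Y} => rfl
      have sum_comp : ∀ {J : Type} [DecidableEq J] (s : Finset J) {X Y Z : C} (g : J → (X ⟶ Y)) (h : Y ⟶ Z),
          (∑ j ∈ s, g j) ≫ h = ∑ j ∈ s, g j ≫ h := by
        intro J _ s X Y Z g h
        induction s using Finset.induction with
        | empty => simp only [Finset.sum_empty]; exact E.zero_comp h
        | insert _ _ hj ih =>
          rw [Finset.sum_insert hj, Finset.sum_insert hj, ← ih]
          exact E.add_comp _ _ _
      have comp_sum : ∀ {J : Type} [DecidableEq J] (s : Finset J) {X Y Z : C} (g : X ⟶ Y) (h : J → (Y ⟶ Z)),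
          g ≫ (∑ j ∈ s, h j) = ∑ j ∈ s, g ≫ h j := by
        intro J _ s X Y Z g h
        induction s using Finset.induction with
        | empty => simp only [Finset.sum_empty]; exact E.comp_zero g
        | insert _ _ hj ih =>
          rw [Finset.sum_insert hj, Finset.sum_insert hj, ← ih]
          exact E.comp_add _ _ _
      constructor
      intro n
      constructor
      intro f
      set ι : ∀ j : Fin n, f j ⟶ ∏ᶜ f := fun j =>
        Pi.lift (fun j' => if h : j = j' then eqToHom (by rw [h]) else E.zero) with hι
      have hιπ : ∀ j j' : Fin n, ι j ≫ Pi.π f j' =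
          if h : j = j' then eqToHom (by rw [h]) else 0 := by
        intro j j'
        by_cases h : j = j'
        · rw [hι]; simp only [limit.lift_π, Fan.mk_π_app]; rw [dif_pos h, dif_pos h]
        · rw [hι]; simp only [limit.lift_π, Fan.mk_π_app]; rw [dif_neg h, dif_neg h]
          exact zero_eq.symm
      have total : (∑ j : Fin n, Pi.π f j ≫ ι j) = 𝟙 (∏ᶜ f) := by
        apply limit.hom_ext
        rintro ⟨k⟩
        rw [sum_comp]
        simp only [Category.assoc, hιπ, Category.id_comp, limit.cone_π]
        rw [Finset.sum_eq_single k]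
        · simp
        · intro j _ hjk
          rw [dif_neg hjk, zero_eq, E.comp_zero, zero_eq]
        · intro h; exact absurd (Finset.mem_univ k) h
      refine HasBiproduct.mk
        { bicone :=
            { pt := ∏ᶜ f
              π := fun j => Pi.π f j
              ι := ι
              ι_π := fun j j' => by
                by_cases h : j = j'
                · rw [hι]; simp only [limit.lift_π, Fan.mk_π_app]; rw [dif_pos h, dif_pos h]
                · rw [hι]; simp only [limit.lift_π, Fan.mk_π_app]; rw [dif_neg h, dif_neg h]
                  exact zero_eq.symm }
          isBilimit := ⟨?_, ?_⟩ }
      · exact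
          { lift := fun s => Pi.lift fun j => s.π.app ⟨j⟩
            fac := fun s => by rintro ⟨j⟩; simp
            uniq := fun s m h => by
              apply limit.hom_ext
              rintro ⟨j⟩
              simpa using h ⟨j⟩ }
      · exact
          { desc := fun s => ∑ j : Fin n, Pi.π f j ≫ s.ι.app ⟨j⟩
            fac := fun s => by
              rintro ⟨j⟩
              dsimp
              erw [comp_sum]
              rw [Finset.sum_eq_single j]
              · rw [← Category.assoc, hιπ, dif_pos rfl]; simp
              · intro k _ hkj
                rw [← Category.assoc, hιπ, dif_neg (fun h => hkj h.symm), zero_eq,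
                  E.zero_comp, zero_eq]
              · intro h; exact absurd (Finset.mem_univ j) h
            uniq := fun s m h => by
              refine (Category.id_comp m).symm.trans ?_
              show 𝟙 (∏ᶜ f) ≫ m = ∑ j : Fin n, Pi.π f j ≫ s.ι.app ⟨j⟩
              ·
                  erw [← total, sum_comp]
                  refine Finset.sum_congr rfl fun j _ => ?_
                  have hj := h ⟨j⟩
                  dsimp at hj ⊢
                  erw [Category.assoc, hj] }
    · rintro ⟨hz, hb⟩
      haveI : HasBinaryBiproducts C := hasBinaryBiproducts_of_finite_biproducts C
      letI : ∀ X Y : C, AddCommMonoid (X ⟶ Y) := fun X Y =>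
        SemiadditiveOfBinaryBiproducts.addCommMonoidHomOfHasBinaryBiproducts X Y
      exact ⟨{ add := fun f g => f + g
               zero := 0
               add_comm := fun f g => _root_.add_comm f g
               add_assoc := fun f g h => _root_.add_assoc f g h
               zero_add := fun f => _root_.zero_add f
               comp_add := fun f g h => SemiadditiveOfBinaryBiproducts.comp_add f g h
               add_comp := fun f g h => SemiadditiveOfBinaryBiproducts.add_comp f g h
               comp_zero := fun f => Limits.comp_zero
               zero_comp := fun f => Limits.zero_comp }⟩
  · intro E X Y
    exact ⟨E.binaryIsColimit X Y⟩
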